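/- Assume d ≥ 2. Let K₂ ⊆ ℂ[A_0,…,A_d] be the ℂ-linear span of the polynomials B_{i,j} := A_{i−1}·A_{j+1} − A_i·A_j for 1 ≤ i ≤ j ≤ d−1 (these form a basis of K₂), and let ρ : K₂ → ℂ[T,U,V] be the ℂ-linear map with ρ(B_{i,j}) = U^{d−j−1}·V^{i−1}·Ψ_{j−i}(T,U,V), where Ψ_k(T,U,V) denotes Ψ_k evaluated at T' = U, T'' = V. Let δ and δ̂ be the ℂ-derivations of ℂ[A_0,…,A_d] with δ(A_k) = k·A_{k−1} and δ̂(A_k) = (d−k)·A_{k+1} (conventions A_{−1} := 0, A_{d+1} := 0), and let δ', δ̂' be the ℂ-derivations of ℂ[T,U,V] with δ'(T) = 2U, δ'(U) = 0, δ'(V) = T and δ̂'(T) = 2V, δ̂'(V) = 0, δ̂'(U) = T. Then: (a) δ and δ̂ map K₂ into K₂; (b) ρ is a ℂ-linear isomorphism from K₂ onto the homogeneous component of degree d−2 of ℂ[T,U,V]; (c) ρ(δ(z)) = δ'(ρ(z)) and ρ(δ̂(z)) = δ̂'(ρ(z)) for all z ∈ K₂. -/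

import Mathlib

open MvPolynomial

/-- `Ψ₀ = 1`, `Ψ₁ = T`, `Ψ_{i+2} = T·Ψ_{i+1} − T'·T''·Ψ_i`, where `T = X 0`, `T' = X 1`,
`T'' = X 2`.  We identify `ℂ[T,T',T'']` with `ℂ[T,U,V]` via `T = X 0`, `U = T' = X 1`,
`V = T'' = X 2`, so that `Ψ_k(T,U,V) = Psi k`. -/
noncomputable def Psi : ℕ → MvPolynomial (Fin 3) ℂ
  | 0 => 1
  | 1 => X 0
  | (n + 2) => X 0 * Psi (n + 1) - X 1 * X 2 * Psi n

/-- The variable `A_j` of `ℂ[A_0,…,A_d]` (for `0 ≤ j ≤ d`; by convention `A_{−1} = 0` and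
`A_{d+1} = 0`, which is matched by the value `0` for out-of-range indices). -/
noncomputable def Av (d j : ℕ) : MvPolynomial (Fin (d + 1)) ℂ :=
  if h : j < d + 1 then X ⟨j, h⟩ else 0

/-- `B_{i,j} = A_{i−1}·A_{j+1} − A_i·A_j`. -/
noncomputable def Brel (d i j : ℕ) : MvPolynomial (Fin (d + 1)) ℂ :=
  Av d (i - 1) * Av d (j + 1) - Av d i * Av d j

/-- The family `(B_{i,j})_{1 ≤ i ≤ j ≤ d−1}`. -/
noncomputable def Bfam (d : ℕ) (p : {p : ℕ × ℕ // 1 ≤ p.1 ∧ p.1 ≤ p.2 ∧ p.2 ≤ d - 1}) :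
    MvPolynomial (Fin (d + 1)) ℂ :=
  Brel d p.1.1 p.1.2

/-- `K₂`, the `ℂ`-linear span of the `B_{i,j}` for `1 ≤ i ≤ j ≤ d−1`. -/
noncomputable def K2 (d : ℕ) : Submodule ℂ (MvPolynomial (Fin (d + 1)) ℂ) :=
  Submodule.span ℂ (Set.range (Bfam d))

/-- The `ℂ`-derivation `δ` of `ℂ[A_0,…,A_d]` with `δ(A_k) = k·A_{k−1}`
(convention `A_{−1} = 0`). -/
noncomputable def deltaD (d : ℕ) (f : MvPolynomial (Fin (d + 1)) ℂ) :
    MvPolynomial (Fin (d + 1)) ℂ :=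
  ∑ k : Fin (d + 1), C ((k : ℕ) : ℂ) * Av d ((k : ℕ) - 1) * pderiv k f

/-- The `ℂ`-derivation `δ̂` of `ℂ[A_0,…,A_d]` with `δ̂(A_k) = (d−k)·A_{k+1}`
(convention `A_{d+1} = 0`). -/
noncomputable def deltaHatD (d : ℕ) (f : MvPolynomial (Fin (d + 1)) ℂ) :
    MvPolynomial (Fin (d + 1)) ℂ :=
  ∑ k : Fin (d + 1), C ((d - (k : ℕ) : ℕ) : ℂ) * Av d ((k : ℕ) + 1) * pderiv k f

/-- The `ℂ`-derivation `δ'` of `ℂ[T,U,V]` with `δ'(T) = 2U`, `δ'(U) = 0`, `δ'(V) = T`. -/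
noncomputable def deltaD' (f : MvPolynomial (Fin 3) ℂ) : MvPolynomial (Fin 3) ℂ :=
  2 * X 1 * pderiv 0 f + X 0 * pderiv 2 f

/-- The `ℂ`-derivation `δ̂'` of `ℂ[T,U,V]` with `δ̂'(T) = 2V`, `δ̂'(V) = 0`, `δ̂'(U) = T`. -/
noncomputable def deltaHatD' (f : MvPolynomial (Fin 3) ℂ) : MvPolynomial (Fin 3) ℂ :=
  2 * X 2 * pderiv 0 f + X 0 * pderiv 1 f

lemma deltaD'_mul (p q : MvPolynomial (Fin 3) ℂ) :
    deltaD' (p * q) = deltaD' p * q + p * deltaD' q := by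
  simp only [deltaD', pderiv_mul]; ring

lemma deltaHatD'_mul (p q : MvPolynomial (Fin 3) ℂ) :
    deltaHatD' (p * q) = deltaHatD' p * q + p * deltaHatD' q := by
  simp only [deltaHatD', pderiv_mul]; ring

lemma deltaD'_X0 : deltaD' (X 0) = 2 * X 1 := by
  simp [deltaD', pderiv_X, Pi.single_apply]

lemma deltaD'_X1 : deltaD' (X 1) = 0 := by
  simp [deltaD', pderiv_X_of_ne (by decide : (0:Fin 3) ≠ 1),
    pderiv_X_of_ne (by decide : (2:Fin 3) ≠ 1)]

lemma deltaD'_X2 : deltaD' (X 2) = X 0 := by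
  simp [deltaD', pderiv_X_self, pderiv_X_of_ne (by decide : (0:Fin 3) ≠ 2)]

lemma deltaHatD'_X0 : deltaHatD' (X 0) = 2 * X 2 := by
  simp [deltaHatD', pderiv_X_self, pderiv_X_of_ne (by decide : (1:Fin 3) ≠ 0)]

lemma deltaHatD'_X1 : deltaHatD' (X 1) = X 0 := by
  simp [deltaHatD', pderiv_X_self, pderiv_X_of_ne (by decide : (0:Fin 3) ≠ 1)]

lemma deltaHatD'_X2 : deltaHatD' (X 2) = 0 := by
  simp [deltaHatD', pderiv_X_of_ne (by decide : (0:Fin 3) ≠ 2),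
    pderiv_X_of_ne (by decide : (1:Fin 3) ≠ 2)]

lemma deltaD'_one : deltaD' 1 = 0 := by simp [deltaD']
lemma deltaHatD'_one : deltaHatD' 1 = 0 := by simp [deltaHatD']

lemma deltaD'_pow (p : MvPolynomial (Fin 3) ℂ) (n : ℕ) :
    deltaD' (p ^ (n+1)) = ((n+1 : ℕ) : ℂ) • (p ^ n * deltaD' p) := by
  induction n with
  | zero => simp
  | succ n ih =>
    rw [pow_succ, deltaD'_mul, ih]
    simp only [smul_eq_C_mul]
    rw [show ((n+1+1:ℕ):ℂ) = ((n+1:ℕ):ℂ) + 1 by push_cast; ring, map_add, map_one]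
    ring

lemma deltaHatD'_pow (p : MvPolynomial (Fin 3) ℂ) (n : ℕ) :
    deltaHatD' (p ^ (n+1)) = ((n+1 : ℕ) : ℂ) • (p ^ n * deltaHatD' p) := by
  induction n with
  | zero => simp
  | succ n ih =>
    rw [pow_succ, deltaHatD'_mul, ih]
    simp only [smul_eq_C_mul]
    rw [show ((n+1+1:ℕ):ℂ) = ((n+1:ℕ):ℂ) + 1 by push_cast; ring, map_add, map_one]
    ring

lemma X0_mul_Psi (c : ℕ) : X 0 * Psi (c+1) = Psi (c+2) + X 1 * X 2 * Psi c := by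
  rw [show Psi (c+2) = X 0 * Psi (c+1) - X 1 * X 2 * Psi c from rfl]; ring

lemma deltaD'_sub (p q : MvPolynomial (Fin 3) ℂ) :
    deltaD' (p - q) = deltaD' p - deltaD' q := by
  simp only [deltaD', map_sub]; ring

lemma deltaHatD'_sub (p q : MvPolynomial (Fin 3) ℂ) :
    deltaHatD' (p - q) = deltaHatD' p - deltaHatD' q := by
  simp only [deltaHatD', map_sub]; ring

lemma Psi_zero : Psi 0 = 1 := rfl
lemma Psi_one : Psi 1 = X 0 := rfl
lemma Psi_two : Psi (c+2) = X 0 * Psi (c+1) - X 1 * X 2 * Psi c := rfl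

lemma deltaD'_Psi : ∀ c : ℕ, deltaD' (Psi (c+1)) = ((c+2 : ℕ) : ℂ) • (X 1 * Psi c) := by
  have key : ∀ c : ℕ, deltaD' (Psi (c+1)) = ((c+2 : ℕ) : ℂ) • (X 1 * Psi c) ∧
      deltaD' (Psi (c+2)) = ((c+3 : ℕ) : ℂ) • (X 1 * Psi (c+1)) := by
    intro c
    induction c with
    | zero =>
      constructor
      · rw [Psi_one, deltaD'_X0, Psi_zero, smul_eq_C_mul]
        rw [show ((0+2:ℕ):ℂ) = 2 by norm_num, show (C 2 : MvPolynomial (Fin 3) ℂ) = 2 from map_ofNat C 2]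
        ring
      · rw [Psi_two, Psi_one, Psi_zero, mul_one, deltaD'_sub, deltaD'_mul, deltaD'_mul,
          deltaD'_X0, deltaD'_X1, deltaD'_X2, smul_eq_C_mul]
        rw [show ((0+3:ℕ):ℂ) = 3 by norm_num, show (C 3 : MvPolynomial (Fin 3) ℂ) = 3 from map_ofNat C 3]
        ring
    | succ n ih =>
      obtain ⟨ih1, ih2⟩ := ih
      refine ⟨ih2, ?_⟩
      have r := X0_mul_Psi n
      rw [show n+1+2 = n+3 from rfl, Psi_two, deltaD'_sub, deltaD'_mul, deltaD'_mul,
        deltaD'_mul, deltaD'_X0, deltaD'_X1, deltaD'_X2, ih1, ih2]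
      simp only [smul_eq_C_mul]
      push_cast
      simp only [map_add, map_one, map_ofNat]
      linear_combination ((C ((n:ℕ):ℂ) + 2) * X 1) * r
  exact fun c => (key c).1

lemma deltaHatD'_Psi : ∀ c : ℕ, deltaHatD' (Psi (c+1)) = ((c+2 : ℕ) : ℂ) • (X 2 * Psi c) := by
  have key : ∀ c : ℕ, deltaHatD' (Psi (c+1)) = ((c+2 : ℕ) : ℂ) • (X 2 * Psi c) ∧
      deltaHatD' (Psi (c+2)) = ((c+3 : ℕ) : ℂ) • (X 2 * Psi (c+1)) := by
    intro c
    induction c with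
    | zero =>
      constructor
      · rw [Psi_one, deltaHatD'_X0, Psi_zero, smul_eq_C_mul]
        rw [show ((0+2:ℕ):ℂ) = 2 by norm_num, show (C 2 : MvPolynomial (Fin 3) ℂ) = 2 from map_ofNat C 2]
        ring
      · rw [Psi_two, Psi_one, Psi_zero, mul_one, deltaHatD'_sub, deltaHatD'_mul, deltaHatD'_mul,
          deltaHatD'_X0, deltaHatD'_X1, deltaHatD'_X2, smul_eq_C_mul]
        rw [show ((0+3:ℕ):ℂ) = 3 by norm_num, show (C 3 : MvPolynomial (Fin 3) ℂ) = 3 from map_ofNat C 3]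
        ring
    | succ n ih =>
      obtain ⟨ih1, ih2⟩ := ih
      refine ⟨ih2, ?_⟩
      have r := X0_mul_Psi n
      rw [show n+1+2 = n+3 from rfl, Psi_two, deltaHatD'_sub, deltaHatD'_mul, deltaHatD'_mul,
        deltaHatD'_mul, deltaHatD'_X0, deltaHatD'_X1, deltaHatD'_X2, ih1, ih2]
      simp only [smul_eq_C_mul]
      push_cast
      simp only [map_add, map_one, map_ofNat]
      linear_combination ((C ((n:ℕ):ℂ) + 2) * X 2) * r
  exact fun c => (key c).1

lemma Psi_hom : ∀ c : ℕ, (Psi c).IsHomogeneous c := by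
  have key : ∀ c : ℕ, (Psi c).IsHomogeneous c ∧ (Psi (c+1)).IsHomogeneous (c+1) := by
    intro c
    induction c with
    | zero => exact ⟨isHomogeneous_one _ _, isHomogeneous_X _ _⟩
    | succ n ih =>
      refine ⟨ih.2, ?_⟩
      rw [Psi_two]
      apply MvPolynomial.IsHomogeneous.sub
      · have := (isHomogeneous_X ℂ (0 : Fin 3)).mul ih.2
        convert this using 1
        exacts [rfl, by omega]
      · have : (X 1 * X 2 : MvPolynomial (Fin 3) ℂ).IsHomogeneous 2 :=
          (isHomogeneous_X _ _).mul (isHomogeneous_X _ _)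
        have := this.mul ih.1
        convert this using 1
        exacts [rfl, by omega]
  exact fun c => (key c).1

lemma P_hom (a b c : ℕ) :
    (X 1 ^ a * X 2 ^ b * Psi c : MvPolynomial (Fin 3) ℂ).IsHomogeneous (a + b + c) :=
  ((isHomogeneous_X_pow _ _).mul (isHomogeneous_X_pow _ _)).mul (Psi_hom c)

def Sset (n : ℕ) : Set (MvPolynomial (Fin 3) ℂ) :=
  {p | ∃ a b c, a + b + c = n ∧ p = X 1 ^ a * X 2 ^ b * Psi c}

lemma Tmul_span (n : ℕ) (p : MvPolynomial (Fin 3) ℂ) (hp : p ∈ Submodule.span ℂ (Sset n)) :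
    X 0 * p ∈ Submodule.span ℂ (Sset (n+1)) := by
  induction hp using Submodule.span_induction with
  | mem x hx =>
    obtain ⟨a, b, c, habc, rfl⟩ := hx
    match c with
    | 0 =>
      have : X 0 * (X 1 ^ a * X 2 ^ b * Psi 0) = X 1 ^ a * X 2 ^ b * Psi 1 := by
        rw [Psi_zero, Psi_one]; ring
      rw [this]
      exact Submodule.subset_span ⟨a, b, 1, by omega, rfl⟩
    | c + 1 =>
      have : X 0 * (X 1 ^ a * X 2 ^ b * Psi (c+1)) =
          X 1 ^ a * X 2 ^ b * Psi (c+2) + X 1 ^ (a+1) * X 2 ^ (b+1) * Psi c := by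
        rw [Psi_two]; ring
      rw [this]
      exact Submodule.add_mem _ (Submodule.subset_span ⟨a, b, c+2, by omega, rfl⟩)
        (Submodule.subset_span ⟨a+1, b+1, c, by omega, rfl⟩)
  | zero => simp
  | add x y _ _ hx hy => rw [mul_add]; exact Submodule.add_mem _ hx hy
  | smul r x _ hx => rw [mul_smul_comm]; exact Submodule.smul_mem _ _ hx

lemma mon_mem_span : ∀ c a b : ℕ,
    (X 0 ^ c * (X 1 ^ a * X 2 ^ b) : MvPolynomial (Fin 3) ℂ) ∈
      Submodule.span ℂ (Sset (a + b + c)) := by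
  intro c
  induction c with
  | zero =>
    intro a b
    have : (X 0 ^ 0 * (X 1 ^ a * X 2 ^ b) : MvPolynomial (Fin 3) ℂ) =
        X 1 ^ a * X 2 ^ b * Psi 0 := by rw [Psi_zero]; ring
    rw [this]
    exact Submodule.subset_span ⟨a, b, 0, rfl, rfl⟩
  | succ c ih =>
    intro a b
    have : (X 0 ^ (c+1) * (X 1 ^ a * X 2 ^ b) : MvPolynomial (Fin 3) ℂ) =
        X 0 * (X 0 ^ c * (X 1 ^ a * X 2 ^ b)) := by ring
    rw [this, show a + b + (c+1) = (a+b+c) + 1 from rfl]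
    exact Tmul_span _ _ (ih a b)

lemma degree_fin3 (m : Fin 3 →₀ ℕ) : m.degree = m 0 + m 1 + m 2 := by
  rw [Finsupp.degree_apply, Finset.sum_subset (Finset.subset_univ _)
    (fun i _ hi => Finsupp.notMem_support_iff.mp hi), Fin.sum_univ_three]

lemma span_Sset (n : ℕ) :
    Submodule.span ℂ (Sset n) = homogeneousSubmodule (Fin 3) ℂ n := by
  apply le_antisymm
  · rw [Submodule.span_le]
    rintro p ⟨a, b, c, habc, rfl⟩
    rw [SetLike.mem_coe, mem_homogeneousSubmodule, ← habc]
    exact P_hom a b c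
  · intro p hp
    rw [mem_homogeneousSubmodule] at hp
    rw [p.as_sum]
    apply Submodule.sum_mem
    intro m hm
    have hdeg : m.degree = n := by
      by_contra h
      exact (MvPolynomial.mem_support_iff.mp hm) (hp.coeff_eq_zero h)
    have : (monomial m (coeff m p) : MvPolynomial (Fin 3) ℂ) =
        coeff m p • (X 0 ^ (m 0) * (X 1 ^ (m 1) * X 2 ^ (m 2))) := by
      rw [monomial_eq, Finsupp.prod_pow, Fin.prod_univ_three, smul_eq_C_mul]; ring
    rw [this]
    apply Submodule.smul_mem
    have := mon_mem_span (m 0) (m 1) (m 2)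
    rwa [show m 1 + m 2 + m 0 = n by rw [← hdeg, degree_fin3]; ring] at this

lemma Av_eq_X (d p : ℕ) (hp : p ≤ d) : Av d p = X (⟨p, by omega⟩ : Fin (d+1)) := by
  simp only [Av]; rw [dif_pos (by omega)]

lemma deltaD_sub (d : ℕ) (p q : MvPolynomial (Fin (d+1)) ℂ) :
    deltaD d (p - q) = deltaD d p - deltaD d q := by
  simp only [deltaD, map_sub, mul_sub, Finset.sum_sub_distrib]

lemma deltaHatD_sub (d : ℕ) (p q : MvPolynomial (Fin (d+1)) ℂ) :
    deltaHatD d (p - q) = deltaHatD d p - deltaHatD d q := by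
  simp only [deltaHatD, map_sub, mul_sub, Finset.sum_sub_distrib]

lemma deltaD_Av_mul (d p q : ℕ) (hp : p ≤ d) (hq : q ≤ d) :
    deltaD d (Av d p * Av d q) =
      C (p:ℂ) * Av d (p-1) * Av d q + C (q:ℂ) * Av d (q-1) * Av d p := by
  rw [Av_eq_X d p hp, Av_eq_X d q hq, deltaD]
  simp only [pderiv_mul, pderiv_X, Pi.single_apply, mul_ite, ite_mul, mul_zero, zero_mul,
    mul_one, one_mul, mul_add, Finset.sum_add_distrib, Finset.sum_ite_eq, Finset.mem_univ,
    if_true]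

lemma deltaHatD_Av_mul (d p q : ℕ) (hp : p ≤ d) (hq : q ≤ d) :
    deltaHatD d (Av d p * Av d q) =
      C ((d-p:ℕ):ℂ) * Av d (p+1) * Av d q + C ((d-q:ℕ):ℂ) * Av d (q+1) * Av d p := by
  rw [Av_eq_X d p hp, Av_eq_X d q hq, deltaHatD]
  simp only [pderiv_mul, pderiv_X, Pi.single_apply, mul_ite, ite_mul, mul_zero, zero_mul,
    mul_one, one_mul, mul_add, Finset.sum_add_distrib, Finset.sum_ite_eq, Finset.mem_univ,
    if_true]

lemma Brel_degenerate (d i : ℕ) : Brel d (i+1) i = 0 := by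
  rw [Brel, Nat.add_sub_cancel, mul_comm, sub_self]

lemma deltaD_add (d : ℕ) (p q : MvPolynomial (Fin (d+1)) ℂ) :
    deltaD d (p + q) = deltaD d p + deltaD d q := by
  simp only [deltaD, map_add, mul_add, Finset.sum_add_distrib]

lemma deltaD_smul (d : ℕ) (r : ℂ) (p : MvPolynomial (Fin (d+1)) ℂ) :
    deltaD d (r • p) = r • deltaD d p := by
  simp only [deltaD, smul_eq_C_mul, pderiv_C_mul, Finset.mul_sum]
  exact Finset.sum_congr rfl fun k _ => by ring

lemma deltaHatD_add (d : ℕ) (p q : MvPolynomial (Fin (d+1)) ℂ) :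
    deltaHatD d (p + q) = deltaHatD d p + deltaHatD d q := by
  simp only [deltaHatD, map_add, mul_add, Finset.sum_add_distrib]

lemma deltaHatD_smul (d : ℕ) (r : ℂ) (p : MvPolynomial (Fin (d+1)) ℂ) :
    deltaHatD d (r • p) = r • deltaHatD d p := by
  simp only [deltaHatD, smul_eq_C_mul, pderiv_C_mul, Finset.mul_sum]
  exact Finset.sum_congr rfl fun k _ => by ring

lemma deltaD_zero (d : ℕ) : deltaD d 0 = 0 := by
  simp [deltaD]

lemma deltaHatD_zero (d : ℕ) : deltaHatD d 0 = 0 := by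
  simp [deltaHatD]

lemma deltaD_Brel (a b c : ℕ) :
    deltaD (a+b+c+2) (Brel (a+b+c+2) (b+1) (b+c+1)) =
      ((b:ℕ):ℂ) • Brel (a+b+c+2) b (b+c+1) + ((b+c+1:ℕ):ℂ) • Brel (a+b+c+2) (b+1) (b+c) := by
  set d := a+b+c+2 with hd
  simp only [Brel, Nat.add_sub_cancel, show b+c+1+1 = b+c+2 from rfl]
  rw [deltaD_sub, deltaD_Av_mul d b (b+c+2) (by omega) (by omega),
    deltaD_Av_mul d (b+1) (b+c+1) (by omega) (by omega)]
  simp only [smul_eq_C_mul, Nat.add_sub_cancel, show b+c+1-1 = b+c from rfl,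
    show b+c+2-1 = b+c+1 from rfl, show b-1+1 = b-1+1 from rfl]
  push_cast
  simp only [map_add, map_one, map_ofNat]
  ring

lemma deltaHatD_Brel (a b c : ℕ) :
    deltaHatD (a+b+c+2) (Brel (a+b+c+2) (b+1) (b+c+1)) =
      ((a:ℕ):ℂ) • Brel (a+b+c+2) (b+1) (b+c+2) + ((a+c+1:ℕ):ℂ) • Brel (a+b+c+2) (b+2) (b+c+1) := by
  set d := a+b+c+2 with hd
  simp only [Brel, Nat.add_sub_cancel, show b+c+1+1 = b+c+2 from rfl,
    show b+c+2+1 = b+c+3 from rfl, show b+2-1 = b+1 from rfl, show b+c+1-1 = b+c from rfl]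
  rw [deltaHatD_sub, deltaHatD_Av_mul d b (b+c+2) (by omega) (by omega),
    deltaHatD_Av_mul d (b+1) (b+c+1) (by omega) (by omega)]
  rw [show d - b = a+c+2 by omega, show d - (b+c+2) = a by omega,
    show d - (b+1) = a+c+1 by omega, show d - (b+c+1) = a+1 by omega]
  simp only [smul_eq_C_mul]
  push_cast
  simp only [map_add, map_one, map_ofNat]
  ring

lemma Brel_mem (d i j : ℕ) (h1 : 1 ≤ i) (h2 : i ≤ j) (h3 : j ≤ d-1) : Brel d i j ∈ K2 d :=
  Submodule.subset_span ⟨⟨(i,j),⟨h1,h2,h3⟩⟩, rfl⟩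

lemma deltaD_Brel_mem (a b c : ℕ) :
    deltaD (a+b+c+2) (Brel (a+b+c+2) (b+1) (b+c+1)) ∈ K2 (a+b+c+2) := by
  rw [deltaD_Brel]
  refine add_mem ?_ ?_
  · match b with
    | 0 => rw [Nat.cast_zero, zero_smul]; exact zero_mem _
    | b + 1 =>
      exact Submodule.smul_mem _ _ (Brel_mem _ _ _ (by omega) (by omega) (by omega))
  · match c with
    | 0 => rw [show b + 0 = b from rfl, Brel_degenerate, smul_zero]; exact zero_mem _
    | c + 1 =>
      exact Submodule.smul_mem _ _ (Brel_mem _ _ _ (by omega) (by omega) (by omega))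

lemma deltaHatD_Brel_mem (a b c : ℕ) :
    deltaHatD (a+b+c+2) (Brel (a+b+c+2) (b+1) (b+c+1)) ∈ K2 (a+b+c+2) := by
  rw [deltaHatD_Brel]
  refine add_mem ?_ ?_
  · match a with
    | 0 => rw [Nat.cast_zero, zero_smul]; exact zero_mem _
    | a + 1 =>
      exact Submodule.smul_mem _ _ (Brel_mem _ _ _ (by omega) (by omega) (by omega))
  · match c with
    | 0 =>
      rw [show b + 0 + 1 = b + 1 from rfl, Brel_degenerate, smul_zero]; exact zero_mem _
    | c + 1 =>
      exact Submodule.smul_mem _ _ (Brel_mem _ _ _ (by omega) (by omega) (by omega))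

lemma param_gen (d i j : ℕ) (h1 : 1 ≤ i) (h2 : i ≤ j) (h3 : j ≤ d-1) (hd : 2 ≤ d) :
    ∃ a b c, i = b+1 ∧ j = b+c+1 ∧ d = a+b+c+2 :=
  ⟨d-j-1, i-1, j-i, by omega, by omega, by omega⟩

lemma deltaD_mem_K2 (d : ℕ) (hd : 2 ≤ d) (z : MvPolynomial (Fin (d+1)) ℂ) (hz : z ∈ K2 d) :
    deltaD d z ∈ K2 d := by
  induction hz using Submodule.span_induction with
  | mem x hx =>
    obtain ⟨⟨⟨i, j⟩, h1, h2, h3⟩, rfl⟩ := hx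
    obtain ⟨a, b, c, rfl, rfl, hdeq⟩ := param_gen d i j h1 h2 h3 hd
    show deltaD d (Brel d (b+1) (b+c+1)) ∈ K2 d
    subst hdeq
    exact deltaD_Brel_mem a b c
  | zero => rw [deltaD_zero]; exact zero_mem _
  | add x y _ _ hx hy => rw [deltaD_add]; exact add_mem hx hy
  | smul r x _ hx => rw [deltaD_smul]; exact Submodule.smul_mem _ _ hx

lemma deltaHatD_mem_K2 (d : ℕ) (hd : 2 ≤ d) (z : MvPolynomial (Fin (d+1)) ℂ) (hz : z ∈ K2 d) :
    deltaHatD d z ∈ K2 d := by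
  induction hz using Submodule.span_induction with
  | mem x hx =>
    obtain ⟨⟨⟨i, j⟩, h1, h2, h3⟩, rfl⟩ := hx
    obtain ⟨a, b, c, rfl, rfl, hdeq⟩ := param_gen d i j h1 h2 h3 hd
    show deltaHatD d (Brel d (b+1) (b+c+1)) ∈ K2 d
    subst hdeq
    exact deltaHatD_Brel_mem a b c
  | zero => rw [deltaHatD_zero]; exact zero_mem _
  | add x y _ _ hx hy => rw [deltaHatD_add]; exact add_mem hx hy
  | smul r x _ hx => rw [deltaHatD_smul]; exact Submodule.smul_mem _ _ hx

lemma deltaD'_X1_pow (a : ℕ) : deltaD' (X 1 ^ a) = 0 := by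
  match a with
  | 0 => rw [pow_zero, deltaD'_one]
  | a + 1 => rw [deltaD'_pow, deltaD'_X1, mul_zero, smul_zero]

lemma deltaHatD'_X2_pow (b : ℕ) : deltaHatD' (X 2 ^ b) = 0 := by
  match b with
  | 0 => rw [pow_zero, deltaHatD'_one]
  | b + 1 => rw [deltaHatD'_pow, deltaHatD'_X2, mul_zero, smul_zero]

lemma deltaD'_Psi0 : deltaD' (Psi 0) = 0 := by rw [Psi_zero, deltaD'_one]
lemma deltaHatD'_Psi0 : deltaHatD' (Psi 0) = 0 := by rw [Psi_zero, deltaHatD'_one]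

lemma dP_00 (a : ℕ) : deltaD' (X 1 ^ a * X 2 ^ 0 * Psi 0) = 0 := by
  rw [deltaD'_mul, deltaD'_mul, deltaD'_X1_pow, deltaD'_Psi0, pow_zero, deltaD'_one]
  ring

lemma dP_b0 (a b : ℕ) : deltaD' (X 1 ^ a * X 2 ^ (b+1) * Psi 0) =
    ((b+1:ℕ):ℂ) • (X 1 ^ a * X 2 ^ b * Psi 1) := by
  rw [deltaD'_mul, deltaD'_mul, deltaD'_X1_pow, deltaD'_Psi0, deltaD'_pow, deltaD'_X2,
    Psi_zero, Psi_one]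
  simp only [smul_eq_C_mul]
  ring

lemma dP_0c (a c : ℕ) : deltaD' (X 1 ^ a * X 2 ^ 0 * Psi (c+1)) =
    ((c+2:ℕ):ℂ) • (X 1 ^ (a+1) * X 2 ^ 0 * Psi c) := by
  rw [deltaD'_mul, deltaD'_mul, deltaD'_X1_pow, deltaD'_Psi, pow_zero, deltaD'_one]
  simp only [smul_eq_C_mul]
  rw [pow_succ]
  ring

lemma dP_bc (a b c : ℕ) : deltaD' (X 1 ^ a * X 2 ^ (b+1) * Psi (c+1)) =
    ((b+1:ℕ):ℂ) • (X 1 ^ a * X 2 ^ b * Psi (c+2)) +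
      ((b+c+3:ℕ):ℂ) • (X 1 ^ (a+1) * X 2 ^ (b+1) * Psi c) := by
  have expand : X 0 * Psi (c+1) = Psi (c+2) + X 1 * X 2 * Psi c := X0_mul_Psi c
  rw [deltaD'_mul, deltaD'_mul, deltaD'_X1_pow, deltaD'_Psi, deltaD'_pow, deltaD'_X2]
  simp only [smul_eq_C_mul]
  push_cast
  simp only [map_add, map_one, map_ofNat]
  linear_combination (C ((b:ℕ):ℂ) + 1) * X 1 ^ a * X 2 ^ b * expand

lemma hP_00 (b : ℕ) : deltaHatD' (X 1 ^ 0 * X 2 ^ b * Psi 0) = 0 := by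
  rw [deltaHatD'_mul, deltaHatD'_mul, deltaHatD'_X2_pow, deltaHatD'_Psi0, pow_zero,
    deltaHatD'_one]
  ring

lemma hP_a0 (a b : ℕ) : deltaHatD' (X 1 ^ (a+1) * X 2 ^ b * Psi 0) =
    ((a+1:ℕ):ℂ) • (X 1 ^ a * X 2 ^ b * Psi 1) := by
  rw [deltaHatD'_mul, deltaHatD'_mul, deltaHatD'_X2_pow, deltaHatD'_Psi0, deltaHatD'_pow,
    deltaHatD'_X1, Psi_zero, Psi_one]
  simp only [smul_eq_C_mul]
  ring

lemma hP_0c (b c : ℕ) : deltaHatD' (X 1 ^ 0 * X 2 ^ b * Psi (c+1)) =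
    ((c+2:ℕ):ℂ) • (X 1 ^ 0 * X 2 ^ (b+1) * Psi c) := by
  rw [deltaHatD'_mul, deltaHatD'_mul, deltaHatD'_X2_pow, deltaHatD'_Psi, pow_zero]
  simp only [deltaHatD'_one, smul_eq_C_mul]
  rw [pow_succ]
  ring

lemma hP_ac (a b c : ℕ) : deltaHatD' (X 1 ^ (a+1) * X 2 ^ b * Psi (c+1)) =
    ((a+1:ℕ):ℂ) • (X 1 ^ a * X 2 ^ b * Psi (c+2)) +
      ((a+c+3:ℕ):ℂ) • (X 1 ^ (a+1) * X 2 ^ (b+1) * Psi c) := by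
  have expand : X 0 * Psi (c+1) = Psi (c+2) + X 1 * X 2 * Psi c := X0_mul_Psi c
  rw [deltaHatD'_mul, deltaHatD'_mul, deltaHatD'_X2_pow, deltaHatD'_Psi, deltaHatD'_pow,
    deltaHatD'_X1]
  simp only [smul_eq_C_mul]
  push_cast
  simp only [map_add, map_one, map_ofNat]
  linear_combination (C ((a:ℕ):ℂ) + 1) * X 1 ^ a * X 2 ^ b * expand

lemma deltaD'_add (p q : MvPolynomial (Fin 3) ℂ) :
    deltaD' (p + q) = deltaD' p + deltaD' q := by
  simp only [deltaD', map_add]; ring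

lemma deltaHatD'_add (p q : MvPolynomial (Fin 3) ℂ) :
    deltaHatD' (p + q) = deltaHatD' p + deltaHatD' q := by
  simp only [deltaHatD', map_add]; ring

lemma deltaD'_zero : deltaD' 0 = 0 := by simp [deltaD']
lemma deltaHatD'_zero : deltaHatD' 0 = 0 := by simp [deltaHatD']

lemma deltaD'_smul (r : ℂ) (p : MvPolynomial (Fin 3) ℂ) :
    deltaD' (r • p) = r • deltaD' p := by
  simp only [deltaD', smul_eq_C_mul, pderiv_C_mul]; ring

lemma deltaHatD'_smul (r : ℂ) (p : MvPolynomial (Fin 3) ℂ) :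
    deltaHatD' (r • p) = r • deltaHatD' p := by
  simp only [deltaHatD', smul_eq_C_mul, pderiv_C_mul]; ring

section Rho

variable {d : ℕ} (ρ : ↥(K2 d) →ₗ[ℂ] MvPolynomial (Fin 3) ℂ)

lemma rho_two {x x1 x2 : MvPolynomial (Fin (d+1)) ℂ} (c1 c2 : ℂ)
    (hx1 : x1 ∈ K2 d) (hx2 : x2 ∈ K2 d) (h : x = c1 • x1 + c2 • x2) (hx : x ∈ K2 d) :
    ρ ⟨x, hx⟩ = c1 • ρ ⟨x1, hx1⟩ + c2 • ρ ⟨x2, hx2⟩ := by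
  have e : (⟨x, hx⟩ : K2 d) = c1 • (⟨x1, hx1⟩ : K2 d) + c2 • (⟨x2, hx2⟩ : K2 d) :=
    Subtype.ext (by simpa using h)
  rw [e, map_add, map_smul, map_smul]

lemma rho_one {x x1 : MvPolynomial (Fin (d+1)) ℂ} (c1 : ℂ)
    (hx1 : x1 ∈ K2 d) (h : x = c1 • x1) (hx : x ∈ K2 d) :
    ρ ⟨x, hx⟩ = c1 • ρ ⟨x1, hx1⟩ := by
  have e : (⟨x, hx⟩ : K2 d) = c1 • (⟨x1, hx1⟩ : K2 d) := Subtype.ext (by simpa using h)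
  rw [e, map_smul]

lemma rho_zero {x : MvPolynomial (Fin (d+1)) ℂ} (h : x = 0) (hx : x ∈ K2 d) :
    ρ ⟨x, hx⟩ = 0 := by
  have e : (⟨x, hx⟩ : K2 d) = 0 := Subtype.ext (by simpa using h)
  rw [e, map_zero]

variable (hρ : ∀ (i j : ℕ) (h1 : 1 ≤ i) (h2 : i ≤ j) (h3 : j ≤ d - 1),
      ρ ⟨Brel d i j, Submodule.subset_span ⟨⟨(i, j), ⟨h1, h2, h3⟩⟩, rfl⟩⟩ =
        X 1 ^ (d - j - 1) * X 2 ^ (i - 1) * Psi (j - i))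

include hρ

lemma rho_Brel (a b c : ℕ) (hdeq : d = a+b+c+2) (hmem : Brel d (b+1) (b+c+1) ∈ K2 d) :
    ρ ⟨Brel d (b+1) (b+c+1), hmem⟩ = X 1 ^ a * X 2 ^ b * Psi c := by
  have h := hρ (b+1) (b+c+1) (by omega) (by omega) (by omega)
  rw [show d - (b+c+1) - 1 = a by omega, Nat.add_sub_cancel,
    show b+c+1 - (b+1) = c by omega] at h
  exact h

lemma rho_Brel' (i j a b c : ℕ) (hi : i = b+1) (hj : j = b+c+1) (hdeq : d = a+b+c+2)
    (hmem : Brel d i j ∈ K2 d) :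
    ρ ⟨Brel d i j, hmem⟩ = X 1 ^ a * X 2 ^ b * Psi c := by
  subst hi hj
  exact rho_Brel ρ hρ a b c hdeq hmem

end Rho

lemma part_c_delta (d : ℕ) (hd : 2 ≤ d) (ρ : ↥(K2 d) →ₗ[ℂ] MvPolynomial (Fin 3) ℂ)
    (hρ : ∀ (i j : ℕ) (h1 : 1 ≤ i) (h2 : i ≤ j) (h3 : j ≤ d - 1),
      ρ ⟨Brel d i j, Submodule.subset_span ⟨⟨(i, j), ⟨h1, h2, h3⟩⟩, rfl⟩⟩ =
        X 1 ^ (d - j - 1) * X 2 ^ (i - 1) * Psi (j - i)) :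
    ∀ z (hz : z ∈ K2 d) (hz' : deltaD d z ∈ K2 d),
      ρ ⟨deltaD d z, hz'⟩ = deltaD' (ρ ⟨z, hz⟩) := by
  intro z hz
  induction hz using Submodule.span_induction with
  | mem x hx =>
    obtain ⟨⟨⟨i, j⟩, h1, h2, h3⟩, rfl⟩ := hx
    obtain ⟨a, b, c, rfl, rfl, hdeq⟩ := param_gen d i j h1 h2 h3 hd
    intro hz'
    change deltaD d (Brel d (b+1) (b+c+1)) ∈ K2 d at hz'
    have dec : deltaD d (Brel d (b+1) (b+c+1)) =
        ((b:ℕ):ℂ) • Brel d b (b+c+1) + ((b+c+1:ℕ):ℂ) • Brel d (b+1) (b+c) := by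
      subst hdeq; exact deltaD_Brel a b c
    show ρ ⟨deltaD d (Brel d (b+1) (b+c+1)), hz'⟩ =
      deltaD' (ρ ⟨Brel d (b+1) (b+c+1), Brel_mem d (b+1) (b+c+1) h1 h2 h3⟩)
    rw [rho_Brel ρ hρ a b c hdeq]
    revert hz' dec
    match b, c with
    | 0, 0 =>
      intro hz' dec
      simp only [Nat.zero_add] at dec hz' ⊢
      rw [rho_zero ρ (by
        rw [dec, show Brel d 1 0 = 0 from Brel_degenerate d 0]
        norm_num)]
      exact (dP_00 a).symm
    | 0, c+1 =>
      intro hz' dec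
      simp only [Nat.zero_add] at dec hz' ⊢
      rw [rho_one ρ ((c+2:ℕ):ℂ) (Brel_mem d 1 (c+1) (by omega) (by omega) (by omega)) (by
        rw [dec]
        push_cast
        module), rho_Brel' ρ hρ 1 (c+1) (a+1) 0 c (by omega) (by omega) (by omega), dP_0c]
    | b+1, 0 =>
      intro hz' dec
      simp only [Nat.add_zero] at dec hz' ⊢
      rw [rho_one ρ ((b+1:ℕ):ℂ) (Brel_mem d (b+1) (b+2) (by omega) (by omega) (by omega)) (by
        rw [dec, show Brel d (b+1+1) (b+1) = 0 from Brel_degenerate d (b+1)]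
        push_cast
        module), rho_Brel' ρ hρ (b+1) (b+2) a b 1 (by omega) (by omega) (by omega), dP_b0]
    | b+1, c+1 =>
      intro hz' dec
      rw [rho_two ρ ((b+1:ℕ):ℂ) ((b+c+3:ℕ):ℂ)
        (Brel_mem d (b+1) (b+c+3) (by omega) (by omega) (by omega))
        (Brel_mem d (b+2) (b+c+2) (by omega) (by omega) (by omega)) (by
          rw [dec, show b+1+(c+1)+1 = b+c+3 by omega, show b+1+(c+1) = b+c+2 by omega,
            show b+1+1 = b+2 from rfl]),
        rho_Brel' ρ hρ (b+1) (b+c+3) a b (c+2) (by omega) (by omega) (by omega),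
        rho_Brel' ρ hρ (b+2) (b+c+2) (a+1) (b+1) c (by omega) (by omega) (by omega), dP_bc]
  | zero =>
    intro hz'
    rw [rho_zero ρ (deltaD_zero d), show (⟨0, Submodule.zero_mem _⟩ : K2 d) = 0 from rfl,
      map_zero, deltaD'_zero]
  | add x y hxm hym ihx ihy =>
    intro hz'
    have hx' := deltaD_mem_K2 d hd x hxm
    have hy' := deltaD_mem_K2 d hd y hym
    have e : (⟨deltaD d (x + y), hz'⟩ : K2 d) =
        ⟨deltaD d x, hx'⟩ + ⟨deltaD d y, hy'⟩ := Subtype.ext (deltaD_add d x y)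
    have e2 : (⟨x + y, add_mem hxm hym⟩ : K2 d) = ⟨x, hxm⟩ + ⟨y, hym⟩ := rfl
    rw [e, map_add, ihx hx', ihy hy', e2, map_add, deltaD'_add]
  | smul r x hxm ihx =>
    intro hz'
    have hx' := deltaD_mem_K2 d hd x hxm
    have e : (⟨deltaD d (r • x), hz'⟩ : K2 d) = r • ⟨deltaD d x, hx'⟩ :=
      Subtype.ext (deltaD_smul d r x)
    have e2 : (⟨r • x, Submodule.smul_mem _ r hxm⟩ : K2 d) = r • ⟨x, hxm⟩ := rfl
    rw [e, map_smul, ihx hx', e2, map_smul, deltaD'_smul]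

lemma part_c_deltaHat (d : ℕ) (hd : 2 ≤ d) (ρ : ↥(K2 d) →ₗ[ℂ] MvPolynomial (Fin 3) ℂ)
    (hρ : ∀ (i j : ℕ) (h1 : 1 ≤ i) (h2 : i ≤ j) (h3 : j ≤ d - 1),
      ρ ⟨Brel d i j, Submodule.subset_span ⟨⟨(i, j), ⟨h1, h2, h3⟩⟩, rfl⟩⟩ =
        X 1 ^ (d - j - 1) * X 2 ^ (i - 1) * Psi (j - i)) :
    ∀ z (hz : z ∈ K2 d) (hz' : deltaHatD d z ∈ K2 d),
      ρ ⟨deltaHatD d z, hz'⟩ = deltaHatD' (ρ ⟨z, hz⟩) := by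
  intro z hz
  induction hz using Submodule.span_induction with
  | mem x hx =>
    obtain ⟨⟨⟨i, j⟩, h1, h2, h3⟩, rfl⟩ := hx
    obtain ⟨a, b, c, rfl, rfl, hdeq⟩ := param_gen d i j h1 h2 h3 hd
    intro hz'
    change deltaHatD d (Brel d (b+1) (b+c+1)) ∈ K2 d at hz'
    have dec : deltaHatD d (Brel d (b+1) (b+c+1)) =
        ((a:ℕ):ℂ) • Brel d (b+1) (b+c+2) + ((a+c+1:ℕ):ℂ) • Brel d (b+2) (b+c+1) := by
      subst hdeq; exact deltaHatD_Brel a b c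
    show ρ ⟨deltaHatD d (Brel d (b+1) (b+c+1)), hz'⟩ =
      deltaHatD' (ρ ⟨Brel d (b+1) (b+c+1), Brel_mem d (b+1) (b+c+1) h1 h2 h3⟩)
    rw [rho_Brel ρ hρ a b c hdeq]
    revert hz' dec
    match a, c, hdeq with
    | 0, 0, hdeq =>
      intro hz' dec
      rw [rho_zero ρ (by
        rw [dec, show Brel d (b+2) (b+0+1) = 0 from Brel_degenerate d (b+1)]
        push_cast
        module)]
      exact (hP_00 b).symm
    | 0, c+1, hdeq =>
      intro hz' dec
      rw [rho_one ρ ((c+2:ℕ):ℂ) (Brel_mem d (b+2) (b+c+2) (by omega) (by omega) (by omega)) (by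
        rw [dec, show b+(c+1)+1 = b+c+2 from rfl, show b+(c+1)+2 = b+c+3 from rfl]
        push_cast
        module),
        rho_Brel' ρ hρ (b+2) (b+c+2) 0 (b+1) c (by omega) (by omega) (by omega), hP_0c]
    | a+1, 0, hdeq =>
      intro hz' dec
      rw [rho_one ρ ((a+1:ℕ):ℂ) (Brel_mem d (b+1) (b+2) (by omega) (by omega) (by omega)) (by
        rw [dec, show Brel d (b+2) (b+0+1) = 0 from Brel_degenerate d (b+1),
          show b+0+2 = b+2 from rfl]
        push_cast
        module),
        rho_Brel' ρ hρ (b+1) (b+2) a b 1 (by omega) (by omega) (by omega), hP_a0]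
    | a+1, c+1, hdeq =>
      intro hz' dec
      rw [rho_two ρ ((a+1:ℕ):ℂ) ((a+c+3:ℕ):ℂ)
        (Brel_mem d (b+1) (b+c+3) (by omega) (by omega) (by omega))
        (Brel_mem d (b+2) (b+c+2) (by omega) (by omega) (by omega)) (by
          rw [dec, show b+(c+1)+1 = b+c+2 from rfl, show b+(c+1)+2 = b+c+3 from rfl]
          push_cast
          module),
        rho_Brel' ρ hρ (b+1) (b+c+3) a b (c+2) (by omega) (by omega) (by omega),
        rho_Brel' ρ hρ (b+2) (b+c+2) (a+1) (b+1) c (by omega) (by omega) (by omega), hP_ac]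
  | zero =>
    intro hz'
    rw [rho_zero ρ (deltaHatD_zero d), show (⟨0, Submodule.zero_mem _⟩ : K2 d) = 0 from rfl,
      map_zero, deltaHatD'_zero]
  | add x y hxm hym ihx ihy =>
    intro hz'
    have hx' := deltaHatD_mem_K2 d hd x hxm
    have hy' := deltaHatD_mem_K2 d hd y hym
    have e : (⟨deltaHatD d (x + y), hz'⟩ : K2 d) =
        ⟨deltaHatD d x, hx'⟩ + ⟨deltaHatD d y, hy'⟩ := Subtype.ext (deltaHatD_add d x y)
    have e2 : (⟨x + y, add_mem hxm hym⟩ : K2 d) = ⟨x, hxm⟩ + ⟨y, hym⟩ := rfl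
    rw [e, map_add, ihx hx', ihy hy', e2, map_add, deltaHatD'_add]
  | smul r x hxm ihx =>
    intro hz'
    have hx' := deltaHatD_mem_K2 d hd x hxm
    have e : (⟨deltaHatD d (r • x), hz'⟩ : K2 d) = r • ⟨deltaHatD d x, hx'⟩ :=
      Subtype.ext (deltaHatD_smul d r x)
    have e2 : (⟨r • x, Submodule.smul_mem _ r hxm⟩ : K2 d) = r • ⟨x, hxm⟩ := rfl
    rw [e, map_smul, ihx hx', e2, map_smul, deltaHatD'_smul]

noncomputable def f3 (x y z : ℕ) : Fin 3 →₀ ℕ := Finsupp.equivFunOnFinite.symm ![x, y, z]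

lemma f3_apply0 (x y z : ℕ) : f3 x y z 0 = x := rfl
lemma f3_apply1 (x y z : ℕ) : f3 x y z 1 = y := rfl
lemma f3_apply2 (x y z : ℕ) : f3 x y z 2 = z := rfl

lemma degree_fin3' (m : Fin 3 →₀ ℕ) : m.degree = m 0 + m 1 + m 2 := by
  rw [Finsupp.degree_apply, Finset.sum_subset (Finset.subset_univ _)
    (fun i _ hi => Finsupp.notMem_support_iff.mp hi), Fin.sum_univ_three]

lemma f3_ext (m : Fin 3 →₀ ℕ) : m = f3 (m 0) (m 1) (m 2) := by
  ext a
  fin_cases a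
  · rfl
  · rfl
  · rfl

noncomputable instance degFintype (n : ℕ) : Fintype {m : Fin 3 →₀ ℕ // m.degree = n} := by
  apply Fintype.subtype (Finset.finsuppAntidiag (Finset.univ : Finset (Fin 3)) n)
  intro m
  rw [Finset.mem_finsuppAntidiag]
  constructor
  · rintro ⟨h, -⟩
    rw [degree_fin3', ← Fin.sum_univ_three m]
    exact h
  · intro h
    refine ⟨?_, Finset.subset_univ _⟩
    rw [Fin.sum_univ_three m, ← degree_fin3', h]

def Jidx (d : ℕ) := {p : ℕ × ℕ // 1 ≤ p.1 ∧ p.1 ≤ p.2 ∧ p.2 ≤ d - 1}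

noncomputable def Jequiv (d : ℕ) (hd : 2 ≤ d) :
    Jidx d ≃ {m : Fin 3 →₀ ℕ // m.degree = d - 2} where
  toFun := fun ⟨⟨i, j⟩, h1, h2, h3⟩ => ⟨f3 (j - i) (d - 1 - j) (i - 1), by
    rw [degree_fin3', f3_apply0, f3_apply1, f3_apply2]
    omega⟩
  invFun := fun ⟨m, hm⟩ => ⟨(m 2 + 1, m 2 + m 0 + 1), by
    rw [degree_fin3'] at hm
    exact ⟨by omega, by omega, by omega⟩⟩
  left_inv p := by
    obtain ⟨⟨i, j⟩, h1, h2, h3⟩ := p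
    apply Subtype.ext
    simp only [f3_apply0, f3_apply1, f3_apply2, Prod.mk.injEq]
    omega
  right_inv m := by
    obtain ⟨m, hm⟩ := m
    rw [degree_fin3'] at hm
    apply Subtype.ext
    simp only
    rw [f3_ext m]
    simp only [f3_apply0, f3_apply1, f3_apply2]
    congr 1 <;> omega

def Mset (n : ℕ) : Set (MvPolynomial (Fin 3) ℂ) :=
  (fun m => (monomial m (1:ℂ))) '' {m : Fin 3 →₀ ℕ | m.degree = n}

noncomputable instance (n : ℕ) : Fintype ↥{m : Fin 3 →₀ ℕ | m.degree = n} := degFintype n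

noncomputable instance (n : ℕ) : Fintype ↥(Mset n) :=
  ((Set.toFinite {m : Fin 3 →₀ ℕ | m.degree = n}).image _).fintype

lemma homog_eq_span_Mset (n : ℕ) :
    homogeneousSubmodule (Fin 3) ℂ n = Submodule.span ℂ (Mset n) := by
  apply le_antisymm
  · intro p hp
    rw [mem_homogeneousSubmodule] at hp
    rw [p.as_sum]
    apply Submodule.sum_mem
    intro m hm
    have hdeg : m.degree = n := by
      by_contra h
      exact (MvPolynomial.mem_support_iff.mp hm) (hp.coeff_eq_zero h)
    have e : (monomial m (coeff m p) : MvPolynomial (Fin 3) ℂ) = (coeff m p) • monomial m 1 := by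
      rw [smul_monomial, smul_eq_mul, mul_one]
    rw [e]
    exact Submodule.smul_mem _ _ (Submodule.subset_span ⟨m, hdeg, rfl⟩)
  · rw [Submodule.span_le]
    rintro q ⟨m, hm, rfl⟩
    exact isHomogeneous_monomial _ hm

lemma Mset_indep (n : ℕ) : LinearIndependent ℂ ((↑) : Mset n → MvPolynomial (Fin 3) ℂ) := by
  have h := (basisMonomials (Fin 3) ℂ).linearIndependent.linearIndepOn_id
  exact h.mono (by rintro q ⟨m, _, rfl⟩; exact ⟨m, by rw [coe_basisMonomials]⟩)

lemma finrank_homog (n : ℕ) : Module.finrank ℂ ↥(homogeneousSubmodule (Fin 3) ℂ n) =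
    Fintype.card {m : Fin 3 →₀ ℕ // m.degree = n} := by
  rw [homog_eq_span_Mset, finrank_span_set_eq_card (Mset_indep n), Set.toFinset_card]
  exact Fintype.card_congr
    (Equiv.Set.image _ _ (monomial_left_injective (one_ne_zero (α := ℂ)))).symm

noncomputable def liftB (d : ℕ) (p : {p : ℕ × ℕ // 1 ≤ p.1 ∧ p.1 ≤ p.2 ∧ p.2 ≤ d - 1}) :
    ↥(K2 d) :=
  ⟨Bfam d p, Submodule.subset_span ⟨p, rfl⟩⟩

lemma top_le_span_liftB (d : ℕ) :
    ∀ x : ↥(K2 d), x ∈ Submodule.span ℂ (Set.range (liftB d)) := by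
  rintro ⟨x, hx⟩
  induction hx using Submodule.span_induction with
  | mem y hy =>
    obtain ⟨p, rfl⟩ := hy
    exact Submodule.subset_span ⟨p, rfl⟩
  | zero => exact zero_mem _
  | add x y hx hy ihx ihy => exact add_mem ihx ihy
  | smul r x hx ihx => exact Submodule.smul_mem _ r ihx

lemma range_rho (d : ℕ) (hd : 2 ≤ d) (ρ : ↥(K2 d) →ₗ[ℂ] MvPolynomial (Fin 3) ℂ)
    (hρ : ∀ (i j : ℕ) (h1 : 1 ≤ i) (h2 : i ≤ j) (h3 : j ≤ d - 1),
      ρ ⟨Brel d i j, Submodule.subset_span ⟨⟨(i, j), ⟨h1, h2, h3⟩⟩, rfl⟩⟩ =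
        X 1 ^ (d - j - 1) * X 2 ^ (i - 1) * Psi (j - i)) :
    LinearMap.range ρ = homogeneousSubmodule (Fin 3) ℂ (d - 2) := by
  have htop : (⊤ : Submodule ℂ ↥(K2 d)) = Submodule.span ℂ (Set.range (liftB d)) :=
    le_antisymm (fun x _ => top_le_span_liftB d x) le_top
  have hset : Set.range (⇑ρ ∘ liftB d) = Sset (d - 2) := by
    ext y
    constructor
    · rintro ⟨⟨⟨i, j⟩, h1, h2, h3⟩, rfl⟩
      obtain ⟨a, b, c, rfl, rfl, hdeq⟩ := param_gen d i j h1 h2 h3 hd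
      exact ⟨a, b, c, by omega,
        rho_Brel' ρ hρ (b+1) (b+c+1) a b c rfl rfl hdeq
          (Submodule.subset_span ⟨⟨(b+1, b+c+1), ⟨h1, h2, h3⟩⟩, rfl⟩)⟩
    · rintro ⟨a, b, c, habc, rfl⟩
      refine ⟨⟨(b+1, b+c+1), ⟨by omega, by omega, by omega⟩⟩, ?_⟩
      exact rho_Brel' ρ hρ (b+1) (b+c+1) a b c rfl rfl (by omega) _
  rw [LinearMap.range_eq_map, htop, Submodule.map_span, ← Set.range_comp, hset, span_Sset]

lemma rho_inj (d : ℕ) (hd : 2 ≤ d) (ρ : ↥(K2 d) →ₗ[ℂ] MvPolynomial (Fin 3) ℂ)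
    (hρ : ∀ (i j : ℕ) (h1 : 1 ≤ i) (h2 : i ≤ j) (h3 : j ≤ d - 1),
      ρ ⟨Brel d i j, Submodule.subset_span ⟨⟨(i, j), ⟨h1, h2, h3⟩⟩, rfl⟩⟩ =
        X 1 ^ (d - j - 1) * X 2 ^ (i - 1) * Psi (j - i)) :
    Function.Injective ρ := by
  have hrange := range_rho d hd ρ hρ
  have hmem : ∀ p, ρ (liftB d p) ∈ homogeneousSubmodule (Fin 3) ℂ (d - 2) := fun p => by
    rw [← hrange]; exact LinearMap.mem_range_self ρ _
  haveI : Fintype {p : ℕ × ℕ // 1 ≤ p.1 ∧ p.1 ≤ p.2 ∧ p.2 ≤ d - 1} :=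
    Fintype.ofEquiv _ (Jequiv d hd).symm
  set bfun : {p : ℕ × ℕ // 1 ≤ p.1 ∧ p.1 ≤ p.2 ∧ p.2 ≤ d - 1} →
      ↥(homogeneousSubmodule (Fin 3) ℂ (d - 2)) := fun p => ⟨ρ (liftB d p), hmem p⟩ with hbfun
  have hspan : ⊤ ≤ Submodule.span ℂ (Set.range bfun) := by
    rintro ⟨y, hy⟩ -
    have hy' : y ∈ Submodule.span ℂ (Set.range fun p => ρ (liftB d p)) := by
      rw [← hrange] at hy
      obtain ⟨x, rfl⟩ := hy
      have hx := top_le_span_liftB d x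
      have : ρ x ∈ Submodule.map ρ (Submodule.span ℂ (Set.range (liftB d))) :=
        ⟨x, hx, rfl⟩
      rwa [Submodule.map_span, ← Set.range_comp] at this
    revert hy
    induction hy' using Submodule.span_induction with
    | mem y hy =>
      obtain ⟨p, rfl⟩ := hy
      intro hym
      exact Submodule.subset_span ⟨p, rfl⟩
    | zero => intro h; exact zero_mem _
    | add x y hx hy ihx ihy =>
      intro h
      have hxm : x ∈ homogeneousSubmodule (Fin 3) ℂ (d - 2) := by
        rw [← hrange]
        exact Submodule.span_le.mpr (by rintro q ⟨p, rfl⟩; exact ⟨liftB d p, rfl⟩) hx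
      have hym : y ∈ homogeneousSubmodule (Fin 3) ℂ (d - 2) := by
        rw [← hrange]
        exact Submodule.span_le.mpr (by rintro q ⟨p, rfl⟩; exact ⟨liftB d p, rfl⟩) hy
      exact add_mem (ihx hxm) (ihy hym)
    | smul r x hx ihx =>
      intro h
      have hxm : x ∈ homogeneousSubmodule (Fin 3) ℂ (d - 2) := by
        rw [← hrange]
        exact Submodule.span_le.mpr (by rintro q ⟨p, rfl⟩; exact ⟨liftB d p, rfl⟩) hx
      exact Submodule.smul_mem _ r (ihx hxm)
  have hcard : Fintype.card {p : ℕ × ℕ // 1 ≤ p.1 ∧ p.1 ≤ p.2 ∧ p.2 ≤ d - 1} =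
      Module.finrank ℂ ↥(homogeneousSubmodule (Fin 3) ℂ (d - 2)) := by
    rw [finrank_homog (d - 2)]
    exact Fintype.card_congr (Jequiv d hd)
  have hind := linearIndependent_of_top_le_span_of_card_eq_finrank hspan hcard
  have hind' : LinearIndependent ℂ (fun p => ρ (liftB d p)) :=
    hind.map' (homogeneousSubmodule (Fin 3) ℂ (d - 2)).subtype (Submodule.ker_subtype _)
  rw [← LinearMap.ker_eq_bot]
  apply (Submodule.eq_bot_iff _).mpr
  intro x hx
  obtain ⟨l, hl⟩ := Finsupp.mem_span_range_iff_exists_finsupp.mp (top_le_span_liftB d x)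
  have h0 : Finsupp.linearCombination ℂ (fun p => ρ (liftB d p)) l = 0 := by
    rw [Finsupp.linearCombination_apply]
    have : (l.sum fun i a => a • ρ (liftB d i)) = ρ (l.sum fun i a => a • liftB d i) := by
      rw [map_finsuppSum]
      exact Finsupp.sum_congr fun i _ => (map_smul ρ _ _).symm
    rw [this, hl]
    exact LinearMap.mem_ker.mp hx
  have hl0 : l = 0 := linearIndependent_iff.mp hind' l h0
  rw [hl0, Finsupp.sum_zero_index] at hl
  exact hl.symm


/-- (a) `δ` and `δ̂` map `K₂` into `K₂`; (b) the linear map `ρ : K₂ → ℂ[T,U,V]`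
with `ρ(B_{i,j}) = U^{d−j−1}·V^{i−1}·Ψ_{j−i}(T,U,V)` is an isomorphism of `K₂` onto the
degree-`(d−2)` homogeneous component of `ℂ[T,U,V]`; (c) `ρ∘δ = δ'∘ρ` and `ρ∘δ̂ = δ̂'∘ρ`
on `K₂`. -/
theorem stmt13 (d : ℕ) (hd : 2 ≤ d)
    (ρ : ↥(K2 d) →ₗ[ℂ] MvPolynomial (Fin 3) ℂ)
    (hρ : ∀ (i j : ℕ) (h1 : 1 ≤ i) (h2 : i ≤ j) (h3 : j ≤ d - 1),
      ρ ⟨Brel d i j, Submodule.subset_span ⟨⟨(i, j), ⟨h1, h2, h3⟩⟩, rfl⟩⟩ =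
        X 1 ^ (d - j - 1) * X 2 ^ (i - 1) * Psi (j - i)) :
    (∀ z ∈ K2 d, deltaD d z ∈ K2 d) ∧
    (∀ z ∈ K2 d, deltaHatD d z ∈ K2 d) ∧
    (Function.Injective ρ ∧
      LinearMap.range ρ = homogeneousSubmodule (Fin 3) ℂ (d - 2)) ∧
    (∀ (z : MvPolynomial (Fin (d + 1)) ℂ) (hz : z ∈ K2 d) (hz' : deltaD d z ∈ K2 d),
      ρ ⟨deltaD d z, hz'⟩ = deltaD' (ρ ⟨z, hz⟩)) ∧
    (∀ (z : MvPolynomial (Fin (d + 1)) ℂ) (hz : z ∈ K2 d) (hz' : deltaHatD d z ∈ K2 d),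
      ρ ⟨deltaHatD d z, hz'⟩ = deltaHatD' (ρ ⟨z, hz⟩)) := by
  exact ⟨fun z hz => deltaD_mem_K2 d hd z hz, fun z hz => deltaHatD_mem_K2 d hd z hz,
    ⟨rho_inj d hd ρ hρ, range_rho d hd ρ hρ⟩, part_c_delta d hd ρ hρ, part_c_deltaHat d hd ρ hρ⟩
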